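/- arXiv:2508.21683 — 2 statements merged into one kernel-verified Lean document; each statement's English description precedes it below -/
import Mathlib

section
/- For the classical Takagi function T = T_2, if x ∈ (0,1) is a dyadic rational, then the level set L(T(x)) = {t ∈ [0,1] : T(t) = T(x)} is infinite. -/
/-- Distance from `x` to the nearest integer. -/
noncomputable def distInt (x : ℝ) : ℝ := |x - round x|

/-- The classical Takagi function `T = T_2`. -/
noncomputable def takagi2 (x : ℝ) : ℝ :=
  ∑' n : ℕ, distInt ((2 : ℝ) ^ n * x) / (2 : ℝ) ^ n

lemma distInt_nonneg (x : ℝ) : 0 ≤ distInt x := abs_nonneg _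

lemma distInt_le_half (x : ℝ) : distInt x ≤ 1/2 := by
  simpa [distInt] using abs_sub_round x

lemma distInt_eq_min (x : ℝ) : distInt x = min (Int.fract x) (1 - Int.fract x) :=
  abs_sub_round_eq_min x

lemma distInt_of_le_half {x : ℝ} (h0 : 0 ≤ x) (h1 : x ≤ 1/2) : distInt x = x := by
  rw [distInt_eq_min, Int.fract_eq_self.2 ⟨h0, by linarith⟩]
  exact min_eq_left (by linarith)

lemma distInt_of_ge_half {x : ℝ} (h0 : 1/2 ≤ x) (h1 : x ≤ 1) : distInt x = 1 - x := by
  rcases eq_or_lt_of_le h1 with rfl | h1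
  · simp [distInt]
  · rw [distInt_eq_min, Int.fract_eq_self.2 ⟨by linarith, h1⟩]
    exact min_eq_right (by linarith)

lemma distInt_add_nat (x : ℝ) (k : ℕ) : distInt (x + k) = distInt x := by
  rw [distInt, round_add_natCast, distInt]
  push_cast
  ring_nf

lemma takagi_summable (x : ℝ) :
    Summable (fun n : ℕ => distInt ((2 : ℝ) ^ n * x) / (2 : ℝ) ^ n) := by
  refine Summable.of_nonneg_of_le (fun n => div_nonneg (distInt_nonneg _) (by positivity)) (fun n => ?_) summable_geometric_two
  rw [div_le_iff₀ (by positivity), one_div, inv_pow]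
  calc distInt ((2:ℝ)^n * x) ≤ 1/2 := distInt_le_half _
  _ ≤ 1 := by norm_num
  _ = ((2:ℝ)^n)⁻¹ * 2^n := by rw [inv_mul_cancel₀ (by positivity)]

lemma takagi_double (x : ℝ) : takagi2 x = distInt x + takagi2 (2*x) / 2 := by
  rw [takagi2, Summable.tsum_eq_zero_add (takagi_summable x)]
  congr 1
  · simp
  · rw [takagi2, eq_div_iff (two_ne_zero), ← tsum_mul_right]
    congr 1; ext n
    rw [pow_succ]
    have : (2:ℝ)^n * 2 * x = 2^n * (2*x) := by ring
    rw [this]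
    field_simp

lemma takagi_add_nat (x : ℝ) (k : ℕ) : takagi2 (x + k) = takagi2 x := by
  unfold takagi2
  congr 1; ext n
  have : (2:ℝ)^n * (x + k) = 2^n * x + ((2^n * k : ℕ) : ℝ) := by push_cast; ring
  rw [this, distInt_add_nat]

lemma takagi_eqA {y : ℝ} (h0 : 0 ≤ y) (h1 : y ≤ 1) :
    takagi2 (y/2) = y/2 + takagi2 y / 2 := by
  have := takagi_double (y/2)
  rw [distInt_of_le_half (by linarith) (by linarith)] at this
  rw [this, show 2*(y/2) = y by ring]

lemma takagi_eqB {y : ℝ} (h0 : 0 ≤ y) (h1 : y ≤ 1) :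
    takagi2 ((1+y)/2) = (1-y)/2 + takagi2 y / 2 := by
  have := takagi_double ((1+y)/2)
  rw [distInt_of_ge_half (by linarith) (by linarith)] at this
  have h2 : 2 * ((1+y)/2) = y + (1:ℕ) := by push_cast; ring
  rw [h2, takagi_add_nat] at this
  rw [this]
  ring

/-- fixed points of T approaching 2/3 -/
noncomputable def uSeq : ℕ → ℝ
  | 0 => 1/2
  | n+1 => (2 + uSeq n)/4

lemma uSeq_mem (n : ℕ) : 1/2 ≤ uSeq n ∧ uSeq n < 2/3 := by
  induction n with
  | zero => norm_num [uSeq]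
  | succ n ih => constructor <;> [skip; skip] <;> (simp only [uSeq]; linarith [ih.1, ih.2])

lemma takagi_uSeq (n : ℕ) : takagi2 (uSeq n) = uSeq n := by
  induction n with
  | zero =>
    have h := takagi_double (1/2 : ℝ)
    rw [distInt_of_ge_half (by norm_num) (by norm_num)] at h
    have h2 : 2 * ((1:ℝ)/2) = 0 + (1:ℕ) := by norm_num
    rw [h2, takagi_add_nat] at h
    have h0 : takagi2 (0:ℝ) = 0 := by
      unfold takagi2
      have : ∀ n : ℕ, distInt ((2:ℝ)^n * 0) / 2^n = 0 := by
        intro n; simp [distInt]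
      simp [distInt, this]
    rw [h0] at h
    rw [show uSeq 0 = 1/2 from rfl]
    rw [h]; norm_num
  | succ n ih =>
    obtain ⟨hl, hr⟩ := uSeq_mem n
    have hA := takagi_eqA (y := uSeq n) (by linarith) (by linarith)
    have hB := takagi_eqB (y := uSeq n / 2) (by linarith) (by linarith)
    have he : (1 + uSeq n / 2)/2 = uSeq (n+1) := by simp [uSeq]; ring
    rw [he, hA, ih] at hB
    rw [hB]
    simp [uSeq]; ring

lemma uSeq_strictMono : StrictMono uSeq := by
  apply strictMono_nat_of_lt_succ
  intro n
  obtain ⟨hl, hr⟩ := uSeq_mem n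
  simp only [uSeq]; linarith

/-- points with T(y) = 1 - y approaching 1/3 -/
noncomputable def ySeq : ℕ → ℝ
  | 0 => 1/2
  | n+1 => (1 + ySeq n)/4

lemma ySeq_mem (n : ℕ) : 1/3 < ySeq n ∧ ySeq n ≤ 1/2 := by
  induction n with
  | zero => norm_num [ySeq]
  | succ n ih => constructor <;> (simp only [ySeq]; linarith [ih.1, ih.2])

lemma takagi_half : takagi2 (1/2 : ℝ) = 1/2 := by
  have := takagi_uSeq 0
  simpa [uSeq] using this

lemma takagi_ySeq (n : ℕ) : takagi2 (ySeq n) = 1 - ySeq n := by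
  induction n with
  | zero => rw [show ySeq 0 = 1/2 from rfl, takagi_half]; norm_num
  | succ n ih =>
    obtain ⟨hl, hr⟩ := ySeq_mem n
    have hB := takagi_eqB (y := ySeq n) (by linarith) (by linarith)
    have hA := takagi_eqA (y := (1 + ySeq n)/2) (by linarith) (by linarith)
    have he : (1 + ySeq n)/2/2 = ySeq (n+1) := by simp [ySeq]; ring
    rw [he, hB, ih] at hA
    rw [hA]
    simp [ySeq]; ring

lemma ySeq_strictAnti : StrictAnti ySeq := by
  apply strictAnti_nat_of_succ_lt
  intro n
  obtain ⟨hl, hr⟩ := ySeq_mem n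
  simp only [ySeq]; linarith

lemma takagi_div_pow {v : ℝ} (h0 : 0 ≤ v) (h1 : v ≤ 1) (j : ℕ) :
    takagi2 (v / 2^j) = ((j:ℝ) * v + takagi2 v) / 2^j := by
  induction j with
  | zero => simp
  | succ j ih =>
    have hj : (1:ℝ) ≤ 2^j := one_le_pow₀ (by norm_num)
    have hb : v / 2^j ≤ 1 := by
      rw [div_le_one (by positivity)]; linarith
    have hA := takagi_eqA (y := v / 2^j) (by positivity) hb
    have he : v / 2^j / 2 = v / 2^(j+1) := by rw [pow_succ]; ring
    rw [he, ih] at hA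
    rw [hA, pow_succ]
    field_simp
    push_cast
    ring

noncomputable def g1it : ℕ → ℝ → ℝ
  | 0, v => v
  | j+1, v => (1 + g1it j v)/2

lemma g1it_mem (j : ℕ) {v : ℝ} (h0 : 0 ≤ v) (h1 : v ≤ 1) :
    0 ≤ g1it j v ∧ g1it j v ≤ 1 := by
  induction j with
  | zero => exact ⟨h0, h1⟩
  | succ j ih => constructor <;> (simp only [g1it]; linarith [ih.1, ih.2])

lemma g1it_takagi (j : ℕ) {v : ℝ} (h0 : 0 ≤ v) (h1 : v ≤ 1) {k : ℕ}
    (hv : takagi2 v = k * (1 - v)) :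
    takagi2 (g1it j v) = ((k:ℝ) + j) * (1 - g1it j v) := by
  induction j with
  | zero => simpa [g1it] using hv
  | succ j ih =>
    obtain ⟨hl, hr⟩ := g1it_mem j h0 h1
    have hB := takagi_eqB (y := g1it j v) hl hr
    rw [ih] at hB
    rw [show g1it (j+1) v = (1 + g1it j v)/2 from rfl, hB]
    push_cast
    ring

lemma g1it_mono (j : ℕ) {v v' : ℝ} (h : v < v') : g1it j v < g1it j v' := by
  induction j with
  | zero => exact h
  | succ j ih => simp only [g1it]; linarith

/-- for every integer s, the equation s*U + T(U) = s/2 + 1/2 has infinitely many solutions -/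
lemma exists_solutions (s : ℤ) : ∃ U : ℕ → ℝ, Function.Injective U ∧
    (∀ n, 0 ≤ U n ∧ U n ≤ 1) ∧
    (∀ n, (s:ℝ) * U n + takagi2 (U n) = (s:ℝ)/2 + 1/2) := by
  rcases lt_trichotomy s 0 with hs | rfl | hs
  · -- s < 0 : U n = 1/2 + (uSeq n / 2^j)/4 with k = -s = j+1
    set j : ℕ := (-s - 1).toNat with hj
    have hsj : (s:ℝ) = -((j:ℝ) + 1) := by
      have h1 : ((j:ℤ)) = -s - 1 := Int.toNat_of_nonneg (by omega)
      have h2 : ((j:ℝ)) = -(s:ℝ) - 1 := by exact_mod_cast h1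
      linarith
    refine ⟨fun n => 1/2 + (uSeq n / 2^j)/4, ?_, ?_, ?_⟩
    · intro a b hab
      have := uSeq_strictMono.injective
      apply this
      have h2 : (0:ℝ) < 2^j := by positivity
      field_simp at hab
      linarith
    · intro n
      obtain ⟨hl, hr⟩ := uSeq_mem n
      have hj1 : (1:ℝ) ≤ 2^j := one_le_pow₀ (by norm_num)
      have hv0 : 0 ≤ uSeq n / 2^j := by positivity
      have hv1 : uSeq n / 2^j ≤ 1 := by
        rw [div_le_one (by positivity)]; linarith
      constructor <;> linarith
    · intro n
      obtain ⟨hl, hr⟩ := uSeq_mem n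
      have hj1 : (1:ℝ) ≤ 2^j := one_le_pow₀ (by norm_num)
      set V := uSeq n / 2^j with hV
      have hv0 : 0 ≤ V := by positivity
      have hv1 : V ≤ 1 := by
        rw [hV, div_le_one (by positivity)]; linarith
      have hTV : takagi2 V = ((j:ℝ) + 1) * V := by
        rw [hV, takagi_div_pow (by linarith) (by linarith) j, takagi_uSeq]
        field_simp
      have hA := takagi_eqA (y := V) hv0 hv1
      have hB := takagi_eqB (y := V/2) (by linarith) (by linarith)
      rw [hA, hTV] at hB
      dsimp only
      rw [← hV, show (1:ℝ)/2 + V/4 = (1 + V/2)/2 by ring, hB, hsj]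
      ring
  · -- s = 0 : U n = (1 + uSeq n)/2
    refine ⟨fun n => (1 + uSeq n)/2, ?_, ?_, ?_⟩
    · intro a b hab
      apply uSeq_strictMono.injective
      dsimp at hab; linarith
    · intro n
      obtain ⟨hl, hr⟩ := uSeq_mem n
      constructor <;> (dsimp; linarith)
    · intro n
      obtain ⟨hl, hr⟩ := uSeq_mem n
      have hB := takagi_eqB (y := uSeq n) (by linarith) (by linarith)
      rw [takagi_uSeq] at hB
      dsimp
      rw [hB]
      push_cast
      ring
  · -- s > 0 : U n = (1 + g1it (s-1) (ySeq n))/4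
    set j : ℕ := (s - 1).toNat with hj
    have hsj : (s:ℝ) = (j:ℝ) + 1 := by
      have h1 : ((j:ℤ)) = s - 1 := Int.toNat_of_nonneg (by omega)
      have h2 : ((j:ℝ)) = (s:ℝ) - 1 := by exact_mod_cast h1
      linarith
    refine ⟨fun n => (1 + g1it j (ySeq n))/4, ?_, ?_, ?_⟩
    · intro a b hab
      apply ySeq_strictAnti.injective
      dsimp at hab
      by_contra hne
      rcases (Ne.lt_or_gt hne) with h | h <;> [skip; skip] <;>
        · have := g1it_mono j h
          linarith
    · intro n
      obtain ⟨hl, hr⟩ := ySeq_mem n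
      obtain ⟨h0, h1⟩ := g1it_mem j (v := ySeq n) (by linarith) (by linarith)
      constructor <;> (dsimp; linarith)
    · intro n
      obtain ⟨hl, hr⟩ := ySeq_mem n
      obtain ⟨h0, h1⟩ := g1it_mem j (v := ySeq n) (by linarith) (by linarith)
      have hT1 : takagi2 (ySeq n) = (1:ℕ) * (1 - ySeq n) := by
        rw [takagi_ySeq]; norm_num
      have hTV := g1it_takagi j (v := ySeq n) (by linarith) (by linarith) hT1
      set V := g1it j (ySeq n) with hV
      have hB := takagi_eqB (y := V) h0 h1
      have hA := takagi_eqA (y := (1 + V)/2) (by linarith) (by linarith)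
      rw [hB, hTV] at hA
      have he : (1 + V)/4 = (1 + V)/2/2 := by ring
      dsimp
      rw [he, hA, hsj]
      push_cast
      ring

noncomputable def gw : List Bool → ℝ → ℝ
  | [], y => y
  | (d :: w), y => if d then (1 + gw w y)/2 else (gw w y)/2

lemma gw_mem (w : List Bool) {y : ℝ} (h0 : 0 ≤ y) (h1 : y ≤ 1) :
    0 ≤ gw w y ∧ gw w y ≤ 1 := by
  induction w with
  | nil => exact ⟨h0, h1⟩
  | cons d w ih =>
    rcases d <;> simp only [gw, if_true, if_false, Bool.false_eq_true] <;>
      constructor <;> linarith [ih.1, ih.2]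

lemma gw_mono (w : List Bool) : StrictMono (gw w) := by
  induction w with
  | nil => exact fun a b h => h
  | cons d w ih =>
    intro a b h
    have := ih h
    rcases d <;> simp only [gw, if_true, if_false, Bool.false_eq_true] <;> linarith

lemma gw_affine (w : List Bool) : ∃ c : ℝ, ∀ y : ℝ, gw w y = c + y / 2^w.length := by
  induction w with
  | nil => exact ⟨0, fun y => by simp [gw]⟩
  | cons d w ih =>
    obtain ⟨c, hc⟩ := ih
    rcases d
    · refine ⟨c/2, fun y => ?_⟩
      simp only [gw, Bool.false_eq_true, if_false, hc, List.length_cons, pow_succ]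
      ring
    · refine ⟨(1+c)/2, fun y => ?_⟩
      simp only [gw, if_true, hc, List.length_cons, pow_succ]
      ring

lemma gw_takagi (w : List Bool) : ∃ (A : ℝ) (s : ℤ), ∀ y : ℝ, 0 ≤ y → y ≤ 1 →
    takagi2 (gw w y) = A + ((s:ℝ) * y + takagi2 y) / 2^w.length := by
  induction w with
  | nil => exact ⟨0, 0, fun y _ _ => by simp [gw]⟩
  | cons d w ih =>
    obtain ⟨A, s, hA⟩ := ih
    obtain ⟨c, hc⟩ := gw_affine w
    rcases d
    · refine ⟨c/2 + A/2, s + 1, fun y h0 h1 => ?_⟩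
      obtain ⟨hz0, hz1⟩ := gw_mem w h0 h1
      have heq := takagi_eqA (y := gw w y) hz0 hz1
      simp only [gw, Bool.false_eq_true, if_false]
      rw [heq, hA y h0 h1, hc y, List.length_cons, pow_succ]
      have h2 : (0:ℝ) < 2^w.length := by positivity
      push_cast
      field_simp
      ring
    · refine ⟨(1 - c)/2 + A/2, s - 1, fun y h0 h1 => ?_⟩
      obtain ⟨hz0, hz1⟩ := gw_mem w h0 h1
      have heq := takagi_eqB (y := gw w y) hz0 hz1
      simp only [gw, if_true]
      have he : (1 + gw w y)/2 = (1 + gw w y)/2 := rfl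
      rw [heq, hA y h0 h1, hc y, List.length_cons, pow_succ]
      have h2 : (0:ℝ) < 2^w.length := by positivity
      push_cast
      field_simp
      ring

lemma dyadic_rep : ∀ (m : ℕ), ∀ (i : ℕ), 0 < (i:ℝ)/2^(m+1) → (i:ℝ)/2^(m+1) < 1 →
    ∃ w : List Bool, (i:ℝ)/2^(m+1) = gw w (1/2) := by
  intro m
  induction m with
  | zero =>
    intro i h0 h1
    have hi0 : 0 < i := by
      by_contra h
      push_neg at h
      interval_cases i
      norm_num at h0
    have hi2 : i < 2 := by
      by_contra h
      push_neg at h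
      have : (2:ℝ) ≤ (i:ℝ) := by exact_mod_cast h
      rw [div_lt_one (by norm_num)] at h1
      norm_num at h1
      linarith
    interval_cases i
    exact ⟨[], by norm_num [gw]⟩
  | succ m ih =>
    intro i h0 h1
    have hp : (0:ℝ) < 2^(m+1) := by positivity
    have hp2 : (0:ℝ) < 2^(m+2) := by positivity
    have hi0 : 0 < i := by
      by_contra h
      push_neg at h
      interval_cases i
      norm_num at h0
    have hi2 : i < 2^(m+2) := by
      rw [div_lt_one hp2] at h1
      exact_mod_cast h1
    rcases lt_trichotomy i (2^(m+1)) with h | h | h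
    · obtain ⟨w, hw⟩ := ih i (by positivity)
        (by rw [div_lt_one hp]; exact_mod_cast h)
      refine ⟨false :: w, ?_⟩
      simp only [gw, Bool.false_eq_true, if_false, ← hw]
      rw [pow_succ]
      ring
    · refine ⟨[], ?_⟩
      subst h
      rw [show gw [] (1/2:ℝ) = 1/2 from rfl]
      push_cast
      rw [div_eq_iff hp2.ne', pow_succ]
      ring
    · set i' := i - 2^(m+1) with hi'
      have hle : 2^(m+1) ≤ i := le_of_lt h
      have hci : (i':ℝ) = (i:ℝ) - 2^(m+1) := by
        rw [hi']
        push_cast [Nat.cast_sub hle]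
        ring
      have hi'0 : 0 < i' := by omega
      have hpow : 2^(m+2) = 2 * 2^(m+1) := by rw [pow_succ]; ring
      have hi'2 : i' < 2^(m+1) := by omega
      obtain ⟨w, hw⟩ := ih i' (by positivity)
        (by rw [div_lt_one hp]; exact_mod_cast hi'2)
      refine ⟨true :: w, ?_⟩
      simp only [gw, if_true, ← hw]
      rw [hci, pow_succ]
      field_simp
      try ring

/-- If `x ∈ (0,1)` is a dyadic rational, then the level set
`{t ∈ [0,1] : T(t) = T(x)}` of the classical Takagi function is infinite. -/
theorem takagi_dyadic_level_set_infinite (x : ℝ) (hx : x ∈ Set.Ioo (0 : ℝ) 1)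
    (hdyadic : ∃ i m : ℕ, 1 ≤ m ∧ x = (i : ℝ) / 2 ^ m) :
    {t ∈ Set.Icc (0 : ℝ) 1 | takagi2 t = takagi2 x}.Infinite := by
  obtain ⟨i, m, hm, hxe⟩ := hdyadic
  obtain ⟨m', rfl⟩ : ∃ m', m = m' + 1 := ⟨m - 1, by omega⟩
  obtain ⟨hx0, hx1⟩ := hx
  obtain ⟨w, hw⟩ := dyadic_rep m' i (by rw [← hxe]; exact hx0) (by rw [← hxe]; exact hx1)
  obtain ⟨A, s, hA⟩ := gw_takagi w
  obtain ⟨U, hUinj, hUmem, hUval⟩ := exists_solutions s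
  apply Set.infinite_of_injective_forall_mem (f := fun n : ℕ => gw w (U n))
  · intro a b hab
    exact hUinj ((gw_mono w).injective hab)
  · intro n
    obtain ⟨h0, h1⟩ := hUmem n
    obtain ⟨hg0, hg1⟩ := gw_mem w h0 h1
    refine ⟨Set.mem_Icc.2 ⟨hg0, hg1⟩, ?_⟩
    have hx2 : takagi2 x = takagi2 (gw w (1/2)) := by rw [hxe, hw]
    rw [hx2, hA (U n) h0 h1, hA (1/2) (by norm_num) (by norm_num), takagi_half]
    rw [hUval n]
    ring
end

section
/- For r = 2 and all m, n ≥ 1, card(Ĥ²_{m+1,n+2}) + card(Ĥ²_{m,n}) = card(Ĥ²_{m+1,n+1}). -/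
open scoped Classical

/-- For a binary string `ε` of length `N`, `D2 ε j` is
`#{i ≤ j : ε_i = 0} − #{i ≤ j : ε_i = 1}` over the first `j` entries. -/
def D2 {N : ℕ} (ε : Fin N → Fin 2) (j : ℕ) : ℤ :=
  ((Finset.univ.filter fun i : Fin N => (i : ℕ) < j ∧ ε i = 0).card : ℤ) -
    ((Finset.univ.filter fun i : Fin N => (i : ℕ) < j ∧ ε i = 1).card : ℤ)

/-- `ε` encodes a leading hump of order `m`: `D_j ≥ 0` for all `j ≤ 2m`,
`D_{2m} = 0`, and `ε_j = 1` whenever `D_j = 0`. -/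
def IsLeadingHump (m : ℕ) (ε : Fin (2 * m) → Fin 2) : Prop :=
  (∀ j, 1 ≤ j → j ≤ 2 * m → 0 ≤ D2 ε j) ∧ D2 ε (2 * m) = 0 ∧
    ∀ j (hj : 1 ≤ j) (hj' : j ≤ 2 * m), D2 ε j = 0 → ε ⟨j - 1, by omega⟩ = 1

/-- `Ĥ²_{m,n}`: the set of binary strings of length `2m` encoding leading
humps of order `m` and generation `n`. -/
noncomputable def H2 (m n : ℕ) : Finset (Fin (2 * m) → Fin 2) :=
  Finset.univ.filter fun ε => IsLeadingHump m ε ∧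
    ((Finset.Icc 1 (2 * m)).filter fun j => D2 ε j = 0).card = n

lemma fin2_cases (x : Fin 2) : x = 0 ∨ x = 1 := by omega

lemma D2_zero {N : ℕ} (ε : Fin N → Fin 2) : D2 ε 0 = 0 := by
  simp [D2]

lemma filter_lt_succ_card {N : ℕ} (ε : Fin N → Fin 2) (j : ℕ) (hj : j < N) (v : Fin 2) :
    (Finset.univ.filter fun i : Fin N => (i : ℕ) < j + 1 ∧ ε i = v).card
      = (Finset.univ.filter fun i : Fin N => (i : ℕ) < j ∧ ε i = v).card
        + (if ε ⟨j, hj⟩ = v then 1 else 0) := by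
  have hsplit : (Finset.univ.filter fun i : Fin N => (i : ℕ) < j + 1 ∧ ε i = v)
      = (Finset.univ.filter fun i : Fin N => (i : ℕ) < j ∧ ε i = v)
        ∪ (Finset.univ.filter fun i : Fin N => i = (⟨j, hj⟩ : Fin N) ∧ ε i = v) := by
    ext i
    simp only [Finset.mem_filter, Finset.mem_union, Finset.mem_univ, true_and]
    constructor
    · rintro ⟨h1, h2⟩
      rcases Nat.lt_succ_iff_lt_or_eq.mp h1 with h | h
      · exact Or.inl ⟨h, h2⟩
      · exact Or.inr ⟨Fin.ext h, h2⟩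
    · rintro (⟨h1, h2⟩ | ⟨h1, h2⟩)
      · exact ⟨Nat.lt_succ_of_lt h1, h2⟩
      · subst h1; exact ⟨Nat.lt_succ_self _, h2⟩
  have hdisj : Disjoint (Finset.univ.filter fun i : Fin N => (i : ℕ) < j ∧ ε i = v)
      (Finset.univ.filter fun i : Fin N => i = (⟨j, hj⟩ : Fin N) ∧ ε i = v) := by
    rw [Finset.disjoint_left]
    intro a ha hb
    simp only [Finset.mem_filter, Finset.mem_univ, true_and] at ha hb
    rw [hb.1] at ha
    exact absurd ha.1 (lt_irrefl j)
  have hsing : (Finset.univ.filter fun i : Fin N => i = (⟨j, hj⟩ : Fin N) ∧ ε i = v)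
      = if ε ⟨j, hj⟩ = v then {(⟨j, hj⟩ : Fin N)} else ∅ := by
    split_ifs with h
    · ext i
      simp only [Finset.mem_filter, Finset.mem_univ, true_and, Finset.mem_singleton]
      exact ⟨fun ⟨a, _⟩ => a, fun a => ⟨a, a ▸ h⟩⟩
    · ext i
      simp only [Finset.mem_filter, Finset.mem_univ, true_and, Finset.notMem_empty,
        iff_false]
      rintro ⟨rfl, hp⟩; exact h hp
  rw [hsplit, Finset.card_union_of_disjoint hdisj, hsing]
  split_ifs <;> simp

lemma D2_succ {N : ℕ} (ε : Fin N → Fin 2) (j : ℕ) (hj : j < N) :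
    D2 ε (j + 1) = D2 ε j + (if ε ⟨j, hj⟩ = 0 then 1 else -1) := by
  unfold D2
  rw [filter_lt_succ_card ε j hj 0, filter_lt_succ_card ε j hj 1]
  rcases fin2_cases (ε ⟨j, hj⟩) with h | h <;> rw [h] <;> push_cast <;> simp <;> ring

lemma D2_congr {N M : ℕ} (ε : Fin N → Fin 2) (η : Fin M → Fin 2) (j : ℕ)
    (hN : j ≤ N) (hM : j ≤ M)
    (h : ∀ i (h1 : i < N) (h2 : i < M), i < j → ε ⟨i, h1⟩ = η ⟨i, h2⟩) :
    D2 ε j = D2 η j := by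
  induction j with
  | zero => rw [D2_zero, D2_zero]
  | succ j ih =>
    have h1 : j < N := by omega
    have h2 : j < M := by omega
    rw [D2_succ ε j h1, D2_succ η j h2, ih (by omega) (by omega)
      (fun i hi1 hi2 hij => h i hi1 hi2 (by omega)), h j h1 h2 (by omega)]

lemma D2_step {N : ℕ} (ε : Fin N → Fin 2) (j : ℕ) (hj : j < N) :
    D2 ε (j + 1) = D2 ε j + 1 ∨ D2 ε (j + 1) = D2 ε j - 1 := by
  rw [D2_succ ε j hj]
  split_ifs <;> [left; right] <;> ring

lemma eps_eq_one_of_down {N : ℕ} (ε : Fin N → Fin 2) (j : ℕ) (hj : j < N)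
    (h : D2 ε (j + 1) ≠ D2 ε j + 1) : ε ⟨j, hj⟩ = 1 := by
  rcases fin2_cases (ε ⟨j, hj⟩) with h0 | h1
  · exfalso; apply h; rw [D2_succ ε j hj, if_pos h0]
  · exact h1

lemma eps_eq_zero_of_up {N : ℕ} (ε : Fin N → Fin 2) (j : ℕ) (hj : j < N)
    (h : D2 ε (j + 1) ≠ D2 ε j - 1) : ε ⟨j, hj⟩ = 0 := by
  rcases fin2_cases (ε ⟨j, hj⟩) with h0 | h1
  · exact h0
  · exfalso; apply h; rw [D2_succ ε j hj, if_neg (by simp [h1])]; ring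

lemma exists_hit {N : ℕ} (ε : Fin N → Fin 2) (c : ℤ) :
    ∀ b, b ≤ N → ∀ a, a ≤ b → D2 ε a < c → c ≤ D2 ε b →
      ∃ t, a < t ∧ t ≤ b ∧ D2 ε t = c := by
  intro b
  induction b with
  | zero =>
    intro _ a ha h1 h2
    have ha0 : a = 0 := by omega
    subst ha0; omega
  | succ b ih =>
    intro hbN a ha h1 h2
    by_cases hc : c ≤ D2 ε b
    · have hab : a ≤ b := by
        rcases Nat.lt_succ_iff_lt_or_eq.mp (Nat.lt_succ_of_le ha) with h | h
        · omega
        · exfalso; rw [h] at h1; omega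
      obtain ⟨t, ht1, ht2, ht3⟩ := ih (by omega) a hab h1 hc
      exact ⟨t, ht1, by omega, ht3⟩
    · push_neg at hc
      have hstep := D2_step ε b (by omega)
      have hbc : D2 ε (b + 1) = c := by omega
      have hab : a < b + 1 := by
        rcases Nat.lt_or_ge a (b + 1) with h | h
        · exact h
        · exfalso
          have hab : a = b + 1 := by omega
          rw [hab] at h1; omega
      exact ⟨b + 1, hab, le_refl _, hbc⟩

/-- insert a `1` at 0-based index `u`, shifting the rest right, dropping last -/
def shiftIns {N : ℕ} (ε : Fin N → Fin 2) (u : ℕ) : Fin N → Fin 2 :=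
  fun j => if (j : ℕ) < u then ε j
    else if (j : ℕ) = u then 1
    else ε ⟨(j : ℕ) - 1, Nat.lt_of_le_of_lt (Nat.sub_le _ _) j.isLt⟩

/-- delete the entry at 0-based index `d`, shifting the rest left, appending `1` -/
def shiftDel {N : ℕ} (η : Fin N → Fin 2) (d : ℕ) : Fin N → Fin 2 :=
  fun j => if h : (j : ℕ) + 1 < N then
      (if (j : ℕ) < d then η j else η ⟨(j : ℕ) + 1, h⟩)
    else 1

lemma D2_shiftIns_le {N : ℕ} (ε : Fin N → Fin 2) (u j : ℕ) (hj : j ≤ u) (hjN : j ≤ N) :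
    D2 (shiftIns ε u) j = D2 ε j := by
  apply D2_congr _ _ j hjN hjN
  intro i h1 h2 hij
  simp only [shiftIns]
  rw [if_pos (show i < u by omega)]

lemma D2_shiftIns_gt {N : ℕ} (ε : Fin N → Fin 2) (u : ℕ) (hu : u < N) :
    ∀ j, u < j → j ≤ N → D2 (shiftIns ε u) j = D2 ε (j - 1) - 1 := by
  intro j
  induction j with
  | zero => omega
  | succ j ih =>
    intro hj hjN
    rcases Nat.lt_or_ge u j with h | h
    · -- inductive case : j > u
      have hjN' : j < N := by omega
      have hj1N : j - 1 < N := by omega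
      have hstep := D2_succ (shiftIns ε u) j hjN'
      have hstep2 := D2_succ ε (j - 1) hj1N
      rw [show j - 1 + 1 = j from by omega] at hstep2
      have hval : shiftIns ε u ⟨j, hjN'⟩ = ε ⟨j - 1, hj1N⟩ := by
        simp only [shiftIns]
        rw [if_neg (show ¬ (j < u) by omega), if_neg (show ¬ (j = u) by omega)]
      rw [show j + 1 - 1 = j from by omega]
      rw [hstep, hval, ih h (by omega), hstep2]
      ring
    · -- base case : j = u
      have hju : u = j := by omega
      subst hju
      have hjN' : u < N := by omega
      have hstep := D2_succ (shiftIns ε u) u hjN'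
      have hval : shiftIns ε u ⟨u, hjN'⟩ = 1 := by
        simp only [shiftIns]
        rw [if_neg (show ¬ (u < u) by omega)]
        simp
      rw [show u + 1 - 1 = u from by omega]
      rw [hstep, hval, D2_shiftIns_le ε u u le_rfl (by omega)]
      norm_num
      ring

lemma D2_shiftDel_le {N : ℕ} (η : Fin N → Fin 2) (d j : ℕ) (hj : j ≤ d) (hd : d + 1 < N) :
    D2 (shiftDel η d) j = D2 η j := by
  apply D2_congr _ _ j (by omega) (by omega)
  intro i h1 h2 hij
  simp only [shiftDel]
  rw [dif_pos (show i + 1 < N by omega), if_pos (show i < d by omega)]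

lemma D2_shiftDel_ge {N : ℕ} (η : Fin N → Fin 2) (d : ℕ) (hd : d + 1 < N)
    (hD : D2 η d = D2 η (d + 1) + 1) :
    ∀ j, d ≤ j → j + 1 ≤ N → D2 (shiftDel η d) j = D2 η (j + 1) + 1 := by
  intro j
  induction j with
  | zero =>
    intro hj _
    have hd0 : d = 0 := by omega
    subst hd0
    have h1 := D2_zero η
    have h2 := D2_zero (shiftDel η 0)
    simp only [zero_add] at hD
    rw [show (0:ℕ) + 1 = 1 from rfl]
    omega
  | succ j ih =>
    intro hj hjN
    rcases Nat.lt_or_ge j d with h | h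
    · -- base : j + 1 = d
      have hjd : j + 1 = d := by omega
      rw [D2_shiftDel_le η d (j+1) (by omega) hd, hjd]
      exact hD
    · -- step
      have hjN' : j < N := by omega
      have hj1N : j + 1 < N := by omega
      have hstep := D2_succ (shiftDel η d) j hjN'
      have hstep2 := D2_succ η (j + 1) hj1N
      have hval : shiftDel η d ⟨j, hjN'⟩ = η ⟨j + 1, hj1N⟩ := by
        simp only [shiftDel]
        rw [dif_pos (show j + 1 < N by omega), if_neg (show ¬ (j < d) by omega)]
      rw [hstep, hval, ih h (by omega), hstep2]
      ring

lemma mem_H2 {m n : ℕ} (ε : Fin (2 * m) → Fin 2) :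
    ε ∈ H2 m n ↔ IsLeadingHump m ε ∧
      ((Finset.Icc 1 (2 * m)).filter fun j => D2 ε j = 0).card = n := by
  simp [H2]

lemma D2_one {N : ℕ} (ε : Fin N → Fin 2) (hN : 1 ≤ N) (hnn : 0 ≤ D2 ε 1) :
    D2 ε 1 = 1 := by
  have h := D2_step ε 0 (by omega)
  have h0 := D2_zero ε
  simp only [Nat.zero_add] at h
  omega

lemma return_prev {N : ℕ} (ε : Fin N → Fin 2)
    (hnn : ∀ j, 1 ≤ j → j ≤ N → 0 ≤ D2 ε j) (j : ℕ) (hj : 2 ≤ j) (hjN : j ≤ N)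
    (h0 : D2 ε j = 0) : D2 ε (j - 1) = 1 := by
  have hs := D2_step ε (j - 1) (by omega)
  rw [show j - 1 + 1 = j from by omega] at hs
  have := hnn (j - 1) (by omega) (by omega)
  omega

lemma third_auto {N : ℕ} (ε : Fin N → Fin 2)
    (hnn : ∀ j, 1 ≤ j → j ≤ N → 0 ≤ D2 ε j) (j : ℕ) (hj : 1 ≤ j) (hj' : j ≤ N)
    (h0 : D2 ε j = 0) : ∀ (h : j - 1 < N), ε ⟨j - 1, h⟩ = 1 := by
  intro h
  apply eps_eq_one_of_down ε (j - 1) h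
  rw [show j - 1 + 1 = j from by omega, h0]
  rcases Nat.lt_or_ge (j - 1) 1 with hc | hc
  · have hz : j - 1 = 0 := by omega
    rw [hz, D2_zero]; omega
  · have := hnn (j - 1) hc (by omega); omega

def truncF (m : ℕ) (ε : Fin (2 * (m + 1)) → Fin 2) : Fin (2 * m) → Fin 2 :=
  fun i => ε ⟨(i : ℕ), by omega⟩

def extF (m : ℕ) (ε : Fin (2 * m) → Fin 2) : Fin (2 * (m + 1)) → Fin 2 :=
  fun j => if h : (j : ℕ) < 2 * m then ε ⟨(j : ℕ), h⟩
    else if (j : ℕ) = 2 * m then 0 else 1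

lemma D2_truncF (m : ℕ) (ε : Fin (2 * (m + 1)) → Fin 2) (j : ℕ) (hj : j ≤ 2 * m) :
    D2 (truncF m ε) j = D2 ε j := by
  apply D2_congr _ _ j (by omega) (by omega)
  intro i h1 h2 hij
  simp only [truncF]

lemma D2_extF_le (m : ℕ) (ε : Fin (2 * m) → Fin 2) (j : ℕ) (hj : j ≤ 2 * m) :
    D2 (extF m ε) j = D2 ε j := by
  apply D2_congr _ _ j (by omega) (by omega)
  intro i h1 h2 hij
  simp only [extF]
  rw [dif_pos (show i < 2 * m from h2)]

lemma D2_extF_s1 (m : ℕ) (ε : Fin (2 * m) → Fin 2) :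
    D2 (extF m ε) (2 * m + 1) = D2 ε (2 * m) + 1 := by
  have hstep := D2_succ (extF m ε) (2 * m) (by omega)
  have hval : extF m ε ⟨2 * m, by omega⟩ = 0 := by
    simp only [extF]
    rw [dif_neg (show ¬ (2 * m < 2 * m) by omega)]
    simp
  rw [hstep, hval, D2_extF_le m ε (2 * m) le_rfl]
  simp

lemma D2_extF_s2 (m : ℕ) (ε : Fin (2 * m) → Fin 2) :
    D2 (extF m ε) (2 * m + 2) = D2 ε (2 * m) := by
  have hstep := D2_succ (extF m ε) (2 * m + 1) (by omega)
  have hval : extF m ε ⟨2 * m + 1, by omega⟩ = 1 := by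
    simp only [extF]
    rw [dif_neg (show ¬ (2 * m + 1 < 2 * m) by omega),
      if_neg (show ¬ (2 * m + 1 = 2 * m) by omega)]
  rw [show 2 * m + 2 = (2 * m + 1) + 1 from rfl, hstep, hval, D2_extF_s1]
  simp

lemma card_eq_of_insert {s t : Finset ℕ} {a : ℕ} (h : s = insert a t) (ha : a ∉ t)
    (k : ℕ) (hs : s.card = k + 1) : t.card = k := by
  rw [h, Finset.card_insert_of_notMem ha] at hs
  omega

lemma cardA (m n : ℕ) :
    ((H2 (m + 1) (n + 1)).filter (fun ε => D2 ε (2 * m) = 0)).card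
      = (H2 m n).card := by
  apply Finset.card_bij' (fun ε _ => truncF m ε) (fun ε _ => extF m ε)
  · -- forward maps into H2 m n
    intro ε hε
    obtain ⟨hH, hD0⟩ := Finset.mem_filter.mp hε
    obtain ⟨⟨hnn, hend0, _⟩, hcard⟩ := (mem_H2 ε).mp hH
    have hend : D2 ε (2 * m + 2) = 0 :=
      (congrArg (D2 ε) (show (2 * m + 2 : ℕ) = 2 * (m + 1) from by ring)).trans hend0
    have h2m1 : D2 ε (2 * m + 1) = 1 := by
      have := return_prev ε (fun j a b => hnn j a (by omega)) (2 * m + 2)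
        (by omega) (by omega) hend
      rw [show 2 * m + 2 - 1 = 2 * m + 1 from by omega] at this
      exact this
    have hnnT : ∀ j, 1 ≤ j → j ≤ 2 * m → 0 ≤ D2 (truncF m ε) j := by
      intro j h1 h2
      rw [D2_truncF m ε j h2]
      exact hnn j h1 (by omega)
    rw [mem_H2]
    refine ⟨⟨hnnT, by rw [D2_truncF m ε (2 * m) le_rfl]; exact hD0,
      fun j h1 h2 h0 => third_auto (truncF m ε) hnnT j h1 h2 h0 _⟩, ?_⟩
    have hset : ((Finset.Icc 1 (2 * (m + 1))).filter fun j => D2 ε j = 0)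
        = insert (2 * (m + 1))
          ((Finset.Icc 1 (2 * m)).filter fun j => D2 (truncF m ε) j = 0) := by
      ext j
      simp only [Finset.mem_insert, Finset.mem_filter, Finset.mem_Icc]
      constructor
      · rintro ⟨⟨hj1, hj2⟩, hj0⟩
        by_cases hc : j = 2 * (m + 1)
        · exact Or.inl hc
        · rcases Nat.lt_or_ge j (2 * m + 1) with hc2 | hc2
          · exact Or.inr ⟨⟨hj1, by omega⟩, by
              rw [D2_truncF m ε j (by omega)]; exact hj0⟩
          · exfalso
            have hj' : j = 2 * m + 1 := by omega
            rw [hj'] at hj0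
            omega
      · rintro (rfl | ⟨⟨hj1, hj2⟩, hj0⟩)
        · exact ⟨⟨by omega, le_rfl⟩, hend0⟩
        · refine ⟨⟨hj1, by omega⟩, ?_⟩
          rw [← D2_truncF m ε j hj2]
          exact hj0
    have hnm : (2 * (m + 1)) ∉
        ((Finset.Icc 1 (2 * m)).filter fun j => D2 (truncF m ε) j = 0) := by
      simp only [Finset.mem_filter, Finset.mem_Icc]
      rintro ⟨⟨_, h⟩, _⟩
      omega
    exact card_eq_of_insert hset hnm n hcard
  · -- backward maps into the filter set
    intro ε' hε'
    obtain ⟨⟨hnn, hend, _⟩, hcard⟩ := (mem_H2 ε').mp hε'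
    have hD2m : D2 (extF m ε') (2 * m) = 0 := by
      rw [D2_extF_le m ε' (2 * m) le_rfl]; exact hend
    have hs1 : D2 (extF m ε') (2 * m + 1) = 1 := by
      rw [D2_extF_s1, hend]; norm_num
    have hs2 : D2 (extF m ε') (2 * m + 2) = 0 := by
      rw [D2_extF_s2]; exact hend
    have hnnE : ∀ j, 1 ≤ j → j ≤ 2 * (m + 1) → 0 ≤ D2 (extF m ε') j := by
      intro j h1 h2
      rcases Nat.lt_or_ge j (2 * m + 1) with hc | hc
      · rw [D2_extF_le m ε' j (by omega)]
        exact hnn j h1 (by omega)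
      · rcases Nat.lt_or_ge j (2 * m + 2) with hc2 | hc2
        · rw [show j = 2 * m + 1 from by omega, hs1]; norm_num
        · rw [show j = 2 * m + 2 from by omega, hs2]
    rw [Finset.mem_filter]
    refine ⟨?_, hD2m⟩
    rw [mem_H2]
    have hendE : D2 (extF m ε') (2 * (m + 1)) = 0 :=
      (congrArg (D2 (extF m ε')) (show (2 * (m + 1) : ℕ) = 2 * m + 2 from by
        ring)).trans hs2
    refine ⟨⟨hnnE, hendE,
      fun j h1 h2 h0 => third_auto (extF m ε') hnnE j h1 h2 h0 _⟩, ?_⟩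
    have hset : ((Finset.Icc 1 (2 * (m + 1))).filter fun j => D2 (extF m ε') j = 0)
        = insert (2 * (m + 1))
          ((Finset.Icc 1 (2 * m)).filter fun j => D2 ε' j = 0) := by
      ext j
      simp only [Finset.mem_insert, Finset.mem_filter, Finset.mem_Icc]
      constructor
      · rintro ⟨⟨hj1, hj2⟩, hj0⟩
        by_cases hc : j = 2 * (m + 1)
        · exact Or.inl hc
        · rcases Nat.lt_or_ge j (2 * m + 1) with hc2 | hc2
          · refine Or.inr ⟨⟨hj1, by omega⟩, ?_⟩
            rw [← D2_extF_le m ε' j (by omega)]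
            exact hj0
          · exfalso
            have hj' : j = 2 * m + 1 := by omega
            rw [hj'] at hj0
            omega
      · rintro (rfl | ⟨⟨hj1, hj2⟩, hj0⟩)
        · exact ⟨⟨by omega, le_rfl⟩, hendE⟩
        · refine ⟨⟨hj1, by omega⟩, ?_⟩
          rw [D2_extF_le m ε' j hj2]
          exact hj0
    have hnm : (2 * (m + 1)) ∉
        ((Finset.Icc 1 (2 * m)).filter fun j => D2 ε' j = 0) := by
      simp only [Finset.mem_filter, Finset.mem_Icc]
      rintro ⟨⟨_, h⟩, _⟩
      omega
    rw [hset, Finset.card_insert_of_notMem hnm, hcard]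
  · -- left inverse
    intro ε hε
    obtain ⟨hH, hD0⟩ := Finset.mem_filter.mp hε
    obtain ⟨⟨hnn, hend0, _⟩, _⟩ := (mem_H2 ε).mp hH
    have hend : D2 ε (2 * m + 2) = 0 :=
      (congrArg (D2 ε) (show (2 * m + 2 : ℕ) = 2 * (m + 1) from by ring)).trans hend0
    have h2m1 : D2 ε (2 * m + 1) = 1 := by
      have := return_prev ε (fun j a b => hnn j a (by omega)) (2 * m + 2)
        (by omega) (by omega) hend
      rw [show 2 * m + 2 - 1 = 2 * m + 1 from by omega] at this
      exact this
    funext j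
    have hjlt := j.isLt
    by_cases h : (j : ℕ) < 2 * m
    · simp only [extF, truncF]
      rw [dif_pos h]
    · by_cases h2 : (j : ℕ) = 2 * m
      · have hval : ε j = 0 := by
          have hz := eps_eq_zero_of_up ε (2 * m) (by omega)
            (by rw [h2m1]; omega)
          rw [show j = (⟨2 * m, by omega⟩ : Fin (2 * (m + 1))) from Fin.ext h2]
          exact hz
        simp only [extF, truncF]
        rw [dif_neg h, if_pos h2, hval]
      · have hval : ε j = 1 := by
          have h3 := third_auto ε hnn (2 * (m + 1)) (by omega) le_rfl hend0
            (by omega)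
          rw [show j = (⟨2 * (m + 1) - 1, by omega⟩ : Fin (2 * (m + 1)))
            from Fin.ext (show (j : ℕ) = 2 * (m + 1) - 1 from by omega)]
          exact h3
        simp only [extF, truncF]
        rw [dif_neg h, if_neg h2, hval]
  · -- right inverse
    intro ε' hε'
    funext i
    simp only [truncF, extF]
    rw [dif_pos (show (i : ℕ) < 2 * m from i.isLt)]

noncomputable def FF (m : ℕ) (ε : Fin (2 * (m + 1)) → Fin 2) : Fin (2 * (m + 1)) → Fin 2 :=
  shiftIns ε (Nat.findGreatest (fun j => D2 ε j = 1) (2 * m))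

noncomputable def GG (m : ℕ) (η : Fin (2 * (m + 1)) → Fin 2) : Fin (2 * (m + 1)) → Fin 2 :=
  shiftDel η (Nat.findGreatest (fun j => D2 η j = 0 ∧ 1 ≤ j) (2 * m + 1) - 1)

lemma B_eps (m n : ℕ) (hm : 1 ≤ m) (ε : Fin (2 * (m + 1)) → Fin 2)
    (hε : ε ∈ (H2 (m + 1) (n + 1)).filter (fun ε => ¬ D2 ε (2 * m) = 0)) :
    FF m ε ∈ H2 (m + 1) (n + 2) ∧ GG m (FF m ε) = ε := by
  obtain ⟨hH, hD0ne⟩ := Finset.mem_filter.mp hε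
  obtain ⟨⟨hnn, hend0, _⟩, hcard⟩ := (mem_H2 ε).mp hH
  have hend : D2 ε (2 * m + 2) = 0 :=
    (congrArg (D2 ε) (show (2 * m + 2 : ℕ) = 2 * (m + 1) from by ring)).trans hend0
  have h2m1 : D2 ε (2 * m + 1) = 1 := by
    have := return_prev ε (fun j a b => hnn j a (by omega)) (2 * m + 2)
      (by omega) (by omega) hend
    rw [show 2 * m + 2 - 1 = 2 * m + 1 from by omega] at this
    exact this
  have h2m : D2 ε (2 * m) = 2 := by
    have hs := D2_step ε (2 * m) (by omega)
    have := hnn (2 * m) (by omega) (by omega)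
    omega
  have hD1 : D2 ε 1 = 1 := D2_one ε (by omega) (hnn 1 (by omega) (by omega))
  set u := Nat.findGreatest (fun j => D2 ε j = 1) (2 * m) with hu_def
  have hu1 : 1 ≤ u := Nat.le_findGreatest (P := fun j => D2 ε j = 1) (by omega) hD1
  have huP : D2 ε u = 1 :=
    Nat.findGreatest_spec (P := fun j => D2 ε j = 1) (by omega : 1 ≤ 2 * m) hD1
  have hu2m : u ≤ 2 * m := Nat.findGreatest_le (P := fun j => D2 ε j = 1) (2 * m)
  have hgt : ∀ j, u < j → j ≤ 2 * m → D2 ε j ≠ 1 := fun j h1 h2 =>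
    Nat.findGreatest_is_greatest (P := fun j => D2 ε j = 1) h1 h2
  have hA : ∀ j, u < j → j ≤ 2 * m → 2 ≤ D2 ε j := by
    intro j h1 h2
    have hne1 := hgt j h1 h2
    have hge := hnn j (by omega) (by omega)
    by_contra hcon
    have hj0 : D2 ε j = 0 := by omega
    obtain ⟨t, ht1, ht2, ht3⟩ := exists_hit ε 1 (2 * m) (by omega) j h2
      (by rw [hj0]; norm_num) (by rw [h2m]; norm_num)
    exact hgt t (by omega) ht2 ht3
  have hFF : FF m ε = shiftIns ε u := rfl
  have hFle : ∀ j, j ≤ u → D2 (shiftIns ε u) j = D2 ε j := fun j hj =>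
    D2_shiftIns_le ε u j hj (by omega)
  have hFgt : ∀ j, u < j → j ≤ 2 * (m + 1) → D2 (shiftIns ε u) j = D2 ε (j - 1) - 1 :=
    D2_shiftIns_gt ε u (by omega)
  have hnnF : ∀ j, 1 ≤ j → j ≤ 2 * (m + 1) → 0 ≤ D2 (shiftIns ε u) j := by
    intro j h1 h2
    rcases Nat.lt_or_ge u j with hc | hc
    · rw [hFgt j hc h2]
      have hval : 1 ≤ D2 ε (j - 1) := by
        rcases Nat.lt_or_ge u (j - 1) with hc1 | hc1
        · rcases Nat.lt_or_ge (j - 1) (2 * m + 1) with hc2 | hc2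
          · have := hA (j - 1) hc1 (by omega); omega
          · rw [show j - 1 = 2 * m + 1 from by omega]; omega
        · rw [show j - 1 = u from by omega]; omega
      omega
    · rw [hFle j hc]
      exact hnn j h1 (by omega)
  have hFend : D2 (shiftIns ε u) (2 * (m + 1)) = 0 := by
    have h := hFgt (2 * (m + 1)) (by omega) le_rfl
    rw [show 2 * (m + 1) - 1 = 2 * m + 1 from by omega] at h
    omega
  have hFu1 : D2 (shiftIns ε u) (u + 1) = 0 := by
    have h := hFgt (u + 1) (by omega) (by omega)
    rw [show u + 1 - 1 = u from by omega] at h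
    omega
  have hFmid : ∀ j, u + 1 < j → j ≤ 2 * m + 1 → 1 ≤ D2 (shiftIns ε u) j := by
    intro j h1 h2
    rw [hFgt j (by omega) (by omega)]
    rcases Nat.lt_or_ge (j - 1) (2 * m + 1) with hc | hc
    · have := hA (j - 1) (by omega) (by omega); omega
    · rw [show j - 1 = 2 * m + 1 from by omega]; omega
  have hset : ((Finset.Icc 1 (2 * (m + 1))).filter fun j => D2 (shiftIns ε u) j = 0)
      = insert (u + 1) ((Finset.Icc 1 (2 * (m + 1))).filter fun j => D2 ε j = 0) := by
    ext j
    simp only [Finset.mem_insert, Finset.mem_filter, Finset.mem_Icc]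
    constructor
    · rintro ⟨⟨hj1, hj2⟩, hj0⟩
      rcases Nat.lt_or_ge u j with hc | hc
      · by_cases hc2 : j = u + 1
        · exact Or.inl hc2
        · rcases Nat.lt_or_ge j (2 * m + 2) with hc3 | hc3
          · exfalso
            have := hFmid j (by omega) (by omega)
            omega
          · have hj' : j = 2 * (m + 1) := by omega
            subst hj'
            exact Or.inr ⟨⟨by omega, le_rfl⟩, hend0⟩
      · rw [hFle j hc] at hj0
        exact Or.inr ⟨⟨hj1, hj2⟩, hj0⟩
    · rintro (rfl | ⟨⟨hj1, hj2⟩, hj0⟩)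
      · exact ⟨⟨by omega, by omega⟩, hFu1⟩
      · refine ⟨⟨hj1, hj2⟩, ?_⟩
        rcases Nat.lt_or_ge u j with hc | hc
        · rcases Nat.lt_or_ge j (2 * m + 1) with hc2 | hc2
          · exfalso; have := hA j hc (by omega); omega
          · rcases Nat.lt_or_ge j (2 * m + 2) with hc3 | hc3
            · exfalso
              have hj' : j = 2 * m + 1 := by omega
              rw [hj'] at hj0
              omega
            · have hj' : j = 2 * (m + 1) := by omega
              subst hj'
              have h := hFgt (2 * (m + 1)) (by omega) le_rfl
              rw [show 2 * (m + 1) - 1 = 2 * m + 1 from by omega] at h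
              omega
        · rw [hFle j hc]
          exact hj0
  have hnm : (u + 1) ∉ ((Finset.Icc 1 (2 * (m + 1))).filter fun j => D2 ε j = 0) := by
    simp only [Finset.mem_filter, Finset.mem_Icc]
    rintro ⟨⟨h1, h2⟩, h0⟩
    rcases Nat.lt_or_ge (u + 1) (2 * m + 1) with hc | hc
    · have := hA (u + 1) (by omega) (by omega); omega
    · have hj' : u + 1 = 2 * m + 1 := by omega
      rw [hj'] at h0
      omega
  have hFmem : FF m ε ∈ H2 (m + 1) (n + 2) := by
    rw [mem_H2, hFF]
    refine ⟨⟨hnnF, hFend,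
      fun j h1 h2 h0 => third_auto (shiftIns ε u) hnnF j h1 h2 h0 _⟩, ?_⟩
    rw [hset, Finset.card_insert_of_notMem hnm, hcard]
  refine ⟨hFmem, ?_⟩
  -- now show GG m (FF m ε) = ε
  have htval : Nat.findGreatest (fun j => D2 (FF m ε) j = 0 ∧ 1 ≤ j) (2 * m + 1) = u + 1 := by
    set T := Nat.findGreatest (fun j => D2 (FF m ε) j = 0 ∧ 1 ≤ j) (2 * m + 1) with hT
    have hge : u + 1 ≤ T :=
      Nat.le_findGreatest (P := fun j => D2 (FF m ε) j = 0 ∧ 1 ≤ j) (by omega)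
        (by rw [hFF]; exact ⟨hFu1, by omega⟩)
    have hle : T ≤ 2 * m + 1 :=
      Nat.findGreatest_le (P := fun j => D2 (FF m ε) j = 0 ∧ 1 ≤ j) (2 * m + 1)
    by_contra hne
    have hsp : D2 (FF m ε) T = 0 ∧ 1 ≤ T :=
      Nat.findGreatest_spec (P := fun j => D2 (FF m ε) j = 0 ∧ 1 ≤ j)
        (by omega : u + 1 ≤ 2 * m + 1) (by rw [hFF]; exact ⟨hFu1, by omega⟩)
    have hmidT := hFmid T (by omega) hle
    rw [hFF] at hsp
    omega
  have hGG : GG m (FF m ε) = shiftDel (shiftIns ε u) u := by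
    rw [GG, htval, hFF]
    norm_num
  rw [hGG]
  funext i
  have hilt := i.isLt
  by_cases hlast : (i : ℕ) + 1 < 2 * (m + 1)
  · by_cases hiu : (i : ℕ) < u
    · simp only [shiftDel, shiftIns]
      rw [dif_pos hlast, if_pos hiu, if_pos hiu]
    · simp only [shiftDel, shiftIns]
      rw [dif_pos hlast, if_neg hiu]
      rw [if_neg (show ¬ ((i : ℕ) + 1 < u) from by omega),
        if_neg (show ¬ ((i : ℕ) + 1 = u) from by omega)]
      exact congrArg ε (Fin.ext (show ((i : ℕ) + 1 - 1 : ℕ) = (i : ℕ) from by omega))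
  · simp only [shiftDel]
    rw [dif_neg hlast]
    have h3 := third_auto ε hnn (2 * (m + 1)) (by omega) le_rfl hend0
      (by omega)
    rw [show i = (⟨2 * (m + 1) - 1, by omega⟩ : Fin (2 * (m + 1)))
      from Fin.ext (show (i : ℕ) = 2 * (m + 1) - 1 from by omega)]
    exact h3.symm

lemma shiftIns_lt {N : ℕ} (ε : Fin N → Fin 2) (u : ℕ) (j : Fin N) (h : (j : ℕ) < u) :
    shiftIns ε u j = ε j := by
  simp only [shiftIns]
  rw [if_pos h]

lemma shiftIns_at {N : ℕ} (ε : Fin N → Fin 2) (u : ℕ) (j : Fin N) (h : (j : ℕ) = u) :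
    shiftIns ε u j = 1 := by
  simp only [shiftIns]
  rw [if_neg (show ¬ ((j : ℕ) < u) from by omega), if_pos h]

lemma shiftIns_gt {N : ℕ} (ε : Fin N → Fin 2) (u : ℕ) (j : Fin N) (h : u < (j : ℕ)) :
    shiftIns ε u j = ε ⟨(j : ℕ) - 1, Nat.lt_of_le_of_lt (Nat.sub_le _ _) j.isLt⟩ := by
  simp only [shiftIns]
  rw [if_neg (show ¬ ((j : ℕ) < u) from by omega),
    if_neg (show ¬ ((j : ℕ) = u) from by omega)]

lemma shiftDel_lt {N : ℕ} (η : Fin N → Fin 2) (d : ℕ) (j : Fin N) (h : (j : ℕ) < d)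
    (h2 : (j : ℕ) + 1 < N) : shiftDel η d j = η j := by
  simp only [shiftDel]
  rw [dif_pos h2, if_pos h]

lemma shiftDel_ge {N : ℕ} (η : Fin N → Fin 2) (d : ℕ) (j : Fin N) (h : d ≤ (j : ℕ))
    (h2 : (j : ℕ) + 1 < N) : shiftDel η d j = η ⟨(j : ℕ) + 1, h2⟩ := by
  simp only [shiftDel]
  rw [dif_pos h2, if_neg (show ¬ ((j : ℕ) < d) from by omega)]

lemma shiftDel_last {N : ℕ} (η : Fin N → Fin 2) (d : ℕ) (j : Fin N)
    (h2 : ¬ ((j : ℕ) + 1 < N)) : shiftDel η d j = 1 := by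
  simp only [shiftDel]
  rw [dif_neg h2]

lemma B_eta (m n : ℕ) (hm : 1 ≤ m) (η : Fin (2 * (m + 1)) → Fin 2)
    (hη : η ∈ H2 (m + 1) (n + 2)) :
    GG m η ∈ (H2 (m + 1) (n + 1)).filter (fun ε => ¬ D2 ε (2 * m) = 0) ∧
      FF m (GG m η) = η := by
  obtain ⟨⟨hnn, hend0, _⟩, hcard⟩ := (mem_H2 η).mp hη
  have hend : D2 η (2 * m + 2) = 0 :=
    (congrArg (D2 η) (show (2 * m + 2 : ℕ) = 2 * (m + 1) from by ring)).trans hend0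
  have hD1 : D2 η 1 = 1 := D2_one η (by omega) (hnn 1 (by omega) (by omega))
  -- find a return in [1, 2m+1]
  have h2card : 1 < ((Finset.Icc 1 (2 * (m + 1))).filter fun j => D2 η j = 0).card := by
    rw [hcard]; omega
  obtain ⟨a, ha, b, hb, hab⟩ := Finset.one_lt_card.mp h2card
  simp only [Finset.mem_filter, Finset.mem_Icc] at ha hb
  have hex : ∃ j0, 1 ≤ j0 ∧ j0 ≤ 2 * m + 1 ∧ D2 η j0 = 0 := by
    by_cases hc : a = 2 * (m + 1)
    · exact ⟨b, hb.1.1, by omega, hb.2⟩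
    · exact ⟨a, ha.1.1, by omega, ha.2⟩
  obtain ⟨j0, hj01, hj02, hj03⟩ := hex
  set t := Nat.findGreatest (fun j => D2 η j = 0 ∧ 1 ≤ j) (2 * m + 1) with ht_def
  obtain ⟨htP0, htP1⟩ : D2 η t = 0 ∧ 1 ≤ t :=
    Nat.findGreatest_spec (P := fun j => D2 η j = 0 ∧ 1 ≤ j) hj02 ⟨hj03, hj01⟩
  have ht2m : t ≤ 2 * m + 1 :=
    Nat.findGreatest_le (P := fun j => D2 η j = 0 ∧ 1 ≤ j) (2 * m + 1)
  have hgt : ∀ j, t < j → j ≤ 2 * m + 1 → D2 η j ≠ 0 := fun j h1 h2 h0 =>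
    Nat.findGreatest_is_greatest (P := fun j => D2 η j = 0 ∧ 1 ≤ j) h1 h2 ⟨h0, by omega⟩
  have ht2 : 2 ≤ t := by
    by_contra hcon
    have ht1 : t = 1 := by omega
    rw [ht1] at htP0
    omega
  have htprev : D2 η (t - 1) = 1 := return_prev η hnn t ht2 (by omega) htP0
  have hDd : D2 η (t - 1) = D2 η ((t - 1) + 1) + 1 := by
    rw [show t - 1 + 1 = t from by omega]
    omega
  have hGle : ∀ j, j ≤ t - 1 → D2 (shiftDel η (t - 1)) j = D2 η j := fun j hj =>
    D2_shiftDel_le η (t - 1) j hj (by omega)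
  have hGge : ∀ j, t - 1 ≤ j → j + 1 ≤ 2 * (m + 1) →
      D2 (shiftDel η (t - 1)) j = D2 η (j + 1) + 1 :=
    D2_shiftDel_ge η (t - 1) (by omega) hDd
  have hG2m1 : D2 (shiftDel η (t - 1)) (2 * m + 1) = 1 := by
    have h := hGge (2 * m + 1) (by omega) (by omega)
    rw [show 2 * m + 1 + 1 = 2 * m + 2 from by omega] at h
    omega
  have hGend : D2 (shiftDel η (t - 1)) (2 * (m + 1)) = 0 := by
    have hstep := D2_succ (shiftDel η (t - 1)) (2 * m + 1) (by omega)
    have hval : shiftDel η (t - 1) ⟨2 * m + 1, by omega⟩ = 1 :=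
      shiftDel_last η (t - 1) _ (show ¬ (2 * m + 1 + 1 < 2 * (m + 1)) from by omega)
    rw [hval, if_neg (show ¬ ((1 : Fin 2) = 0) from by decide)] at hstep
    have hi : D2 (shiftDel η (t - 1)) (2 * (m + 1))
        = D2 (shiftDel η (t - 1)) (2 * m + 1 + 1) :=
      congrArg _ (by ring)
    rw [hi, hstep, hG2m1]
    norm_num
  have hnnG : ∀ j, 1 ≤ j → j ≤ 2 * (m + 1) → 0 ≤ D2 (shiftDel η (t - 1)) j := by
    intro j h1 h2
    rcases Nat.lt_or_ge j t with hc | hc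
    · rw [hGle j (by omega)]
      exact hnn j h1 (by omega)
    · rcases Nat.lt_or_ge j (2 * m + 2) with hc2 | hc2
      · rw [hGge j (by omega) (by omega)]
        have := hnn (j + 1) (by omega) (by omega)
        omega
      · rw [show j = 2 * (m + 1) from by omega, hGend]
  have hGne : ¬ D2 (shiftDel η (t - 1)) (2 * m) = 0 := by
    have h := hGge (2 * m) (by omega) (by omega)
    have := hnn (2 * m + 1) (by omega) (by omega)
    omega
  have hset : ((Finset.Icc 1 (2 * (m + 1))).filter fun j => D2 η j = 0)
      = insert t ((Finset.Icc 1 (2 * (m + 1))).filter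
          fun j => D2 (shiftDel η (t - 1)) j = 0) := by
    ext j
    simp only [Finset.mem_insert, Finset.mem_filter, Finset.mem_Icc]
    constructor
    · rintro ⟨⟨h1, h2⟩, h0⟩
      by_cases hc : j = t
      · exact Or.inl hc
      · rcases Nat.lt_or_ge j t with hc2 | hc2
        · exact Or.inr ⟨⟨h1, h2⟩, by rw [hGle j (by omega)]; exact h0⟩
        · rcases Nat.lt_or_ge j (2 * m + 2) with hc3 | hc3
          · exact absurd h0 (hgt j (by omega) (by omega))
          · have hj' : j = 2 * (m + 1) := by omega
            subst hj'
            exact Or.inr ⟨⟨by omega, le_rfl⟩, hGend⟩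
    · rintro (rfl | ⟨⟨h1, h2⟩, h0⟩)
      · exact ⟨⟨by omega, by omega⟩, htP0⟩
      · refine ⟨⟨h1, h2⟩, ?_⟩
        rcases Nat.lt_or_ge j t with hc | hc
        · rw [hGle j (by omega)] at h0
          exact h0
        · rcases Nat.lt_or_ge j (2 * m + 2) with hc2 | hc2
          · exfalso
            have h := hGge j (by omega) (by omega)
            have := hnn (j + 1) (by omega) (by omega)
            omega
          · have hj' : j = 2 * (m + 1) := by omega
            subst hj'
            exact hend0
  have hnmt : t ∉ ((Finset.Icc 1 (2 * (m + 1))).filter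
      fun j => D2 (shiftDel η (t - 1)) j = 0) := by
    simp only [Finset.mem_filter, Finset.mem_Icc]
    rintro ⟨⟨h1, h2⟩, h0⟩
    have h := hGge t (by omega) (by omega)
    have := hnn (t + 1) (by omega) (by omega)
    omega
  have hcardG : ((Finset.Icc 1 (2 * (m + 1))).filter
      fun j => D2 (shiftDel η (t - 1)) j = 0).card = n + 1 :=
    card_eq_of_insert hset hnmt (n + 1) (by omega)
  have hGH : GG m η = shiftDel η (t - 1) := by
    unfold GG
    rw [← ht_def]
  have hGmem : GG m η ∈ (H2 (m + 1) (n + 1)).filter (fun ε => ¬ D2 ε (2 * m) = 0) := by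
    rw [Finset.mem_filter, hGH]
    exact ⟨(mem_H2 _).mpr ⟨⟨hnnG, hGend,
      fun j h1 h2 h0 => third_auto (shiftDel η (t - 1)) hnnG j h1 h2 h0 _⟩, hcardG⟩, hGne⟩
  refine ⟨hGmem, ?_⟩
  -- show FF m (GG m η) = η
  have huval : Nat.findGreatest (fun j => D2 (GG m η) j = 1) (2 * m) = t - 1 := by
    set U := Nat.findGreatest (fun j => D2 (GG m η) j = 1) (2 * m) with hU
    have hge : t - 1 ≤ U :=
      Nat.le_findGreatest (P := fun j => D2 (GG m η) j = 1) (by omega)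
        (by show D2 (GG m η) (t - 1) = 1
            rw [hGH, hGle (t - 1) le_rfl]; exact htprev)
    have hle : U ≤ 2 * m :=
      Nat.findGreatest_le (P := fun j => D2 (GG m η) j = 1) (2 * m)
    by_contra hne
    have hsp : D2 (GG m η) U = 1 :=
      Nat.findGreatest_spec (P := fun j => D2 (GG m η) j = 1) (by omega : t - 1 ≤ 2 * m)
        (by show D2 (GG m η) (t - 1) = 1
            rw [hGH, hGle (t - 1) le_rfl]; exact htprev)
    rw [hGH] at hsp
    have h := hGge U (by omega) (by omega)
    have h2 := hgt (U + 1) (by omega) (by omega)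
    have h3 := hnn (U + 1) (by omega) (by omega)
    omega
  have hFFG : FF m (GG m η) = shiftIns (shiftDel η (t - 1)) (t - 1) := by
    unfold FF
    rw [huval, hGH]
  rw [hFFG]
  funext i
  have hilt := i.isLt
  rcases Nat.lt_or_ge (i : ℕ) (t - 1) with hc | hc
  · rw [shiftIns_lt _ _ _ hc, shiftDel_lt _ _ _ hc (by omega)]
  · by_cases hc2 : (i : ℕ) = t - 1
    · rw [shiftIns_at _ _ _ hc2]
      have h3 := third_auto η hnn t (by omega) (by omega) htP0 (by omega)
      rw [show i = (⟨t - 1, by omega⟩ : Fin (2 * (m + 1)))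
        from Fin.ext (show (i : ℕ) = t - 1 from hc2)]
      exact h3.symm
    · exact (shiftIns_gt _ _ _ (show t - 1 < (i : ℕ) from by omega)).trans
        ((shiftDel_ge η (t - 1)
            (⟨(i : ℕ) - 1, Nat.lt_of_le_of_lt (Nat.sub_le _ _) i.isLt⟩ : Fin (2 * (m + 1)))
            (show t - 1 ≤ (i : ℕ) - 1 from by omega)
            (show (i : ℕ) - 1 + 1 < 2 * (m + 1) from by omega)).trans
          (congrArg η (Fin.ext (show ((i : ℕ) - 1) + 1 = (i : ℕ) from by omega))))

lemma cardB (m n : ℕ) (hm : 1 ≤ m) :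
    ((H2 (m + 1) (n + 1)).filter (fun ε => ¬ D2 ε (2 * m) = 0)).card
      = (H2 (m + 1) (n + 2)).card :=
  Finset.card_bij' (fun ε _ => FF m ε) (fun η _ => GG m η)
    (fun ε hε => (B_eps m n hm ε hε).1)
    (fun η hη => (B_eta m n hm η hη).1)
    (fun ε hε => (B_eps m n hm ε hε).2)
    (fun η hη => (B_eta m n hm η hη).2)

theorem card_H2_recurrence_aux (m n : ℕ) (hm : 1 ≤ m) (hn : 1 ≤ n) :
    (H2 (m + 1) (n + 2)).card + (H2 m n).card = (H2 (m + 1) (n + 1)).card := by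
  calc (H2 (m + 1) (n + 2)).card + (H2 m n).card
      = ((H2 (m + 1) (n + 1)).filter (fun ε => ¬ D2 ε (2 * m) = 0)).card
        + ((H2 (m + 1) (n + 1)).filter (fun ε => D2 ε (2 * m) = 0)).card := by
        rw [cardA m n, cardB m n hm]
    _ = (H2 (m + 1) (n + 1)).card := by
        rw [add_comm]
        exact Finset.card_filter_add_card_filter_not
          (p := fun ε => D2 ε (2 * m) = 0)

/-- For all `m, n ≥ 1`,
`card(Ĥ²_{m+1,n+2}) + card(Ĥ²_{m,n}) = card(Ĥ²_{m+1,n+1})`. -/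
theorem card_H2_recurrence (m n : ℕ) (hm : 1 ≤ m) (hn : 1 ≤ n) :
    (H2 (m + 1) (n + 2)).card + (H2 m n).card = (H2 (m + 1) (n + 1)).card :=
  card_H2_recurrence_aux m n hm hn
end
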